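/- arXiv:2209.15594 — 4 statements merged into one kernel-verified Lean document; each statement's English description precedes it below -/
import Mathlib

section
/- Let α, β > 0 and let X, Y : ℝ → ℝ be differentiable functions with X(t) > 0 for all t, satisfying the ODE system X'(t) = X(t) Y(t) and Y'(t) = α − β X(t)²/2. Then the quantity g(X(t), Y(t)) := h(β X(t)²/(2α)) + Y(t)²/α is constant in t, where h(z) := z − log z − 1. -/
/-- For the planar ODE `X' = XY`, `Y' = α − βX²/2` with `α, β > 0` and
`X(t) > 0` for all `t`, the quantity `g(X,Y) := h(βX²/(2α)) + Y²/α` with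
`h(z) := z − log z − 1` is constant in `t`. -/
theorem conserved_quantity (α β : ℝ) (hα : 0 < α) (hβ : 0 < β)
    (X Y : ℝ → ℝ) (hXpos : ∀ t, 0 < X t)
    (hX : ∀ t, HasDerivAt X (X t * Y t) t)
    (hY : ∀ t, HasDerivAt Y (α - β * X t ^ 2 / 2) t) :
    ∀ t₁ t₂ : ℝ,
      (β * X t₁ ^ 2 / (2 * α) - Real.log (β * X t₁ ^ 2 / (2 * α)) - 1) + Y t₁ ^ 2 / α =
      (β * X t₂ ^ 2 / (2 * α) - Real.log (β * X t₂ ^ 2 / (2 * α)) - 1) + Y t₂ ^ 2 / α := by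
  intro t₁ t₂
  set g : ℝ → ℝ := fun t =>
    (β * X t ^ 2 / (2 * α) - Real.log (β * X t ^ 2 / (2 * α)) - 1) + Y t ^ 2 / α with hg
  have key : ∀ t, HasDerivAt g 0 t := by
    intro t
    have hXt := hXpos t
    have hz : β * X t ^ 2 / (2 * α) ≠ 0 := by positivity
    have h1 : HasDerivAt (fun t => β * X t ^ 2 / (2 * α))
        (β * (2 * X t * (X t * Y t)) / (2 * α)) t := by
      simpa using (((hX t).pow 2).const_mul β).div_const (2 * α)
    have h2 : HasDerivAt (fun t => Real.log (β * X t ^ 2 / (2 * α)))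
        ((β * X t ^ 2 / (2 * α))⁻¹ * (β * (2 * X t * (X t * Y t)) / (2 * α))) t :=
      by have := (Real.hasDerivAt_log hz).comp t h1; exact this
    have h3 : HasDerivAt (fun t => Y t ^ 2 / α)
        (2 * Y t * (α - β * X t ^ 2 / 2) / α) t := by
      simpa using (((hY t).pow 2).div_const α)
    have h : HasDerivAt g _ t := ((h1.sub h2).sub_const 1).add h3
    convert h using 1
    field_simp
    ring
  have hconst := fun t => (key t).deriv
  have : ∀ t, g t = g 0 := by
    intro t
    have := is_const_of_deriv_eq_zero (f := g)
      (fun t => (key t).differentiableAt) (fun t => (key t).deriv) t 0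
    exact this
  simpa [hg] using (this t₁).trans (this t₂).symm
end

section
/- Let α, β > 0, set δ := √(2α/β), and let X, Y : [0, ∞) → ℝ be differentiable with X(t) > 0 for all t ≥ 0, satisfying X'(t) = X(t)Y(t) and Y'(t) = α − β X(t)²/2, with initial conditions 0 < X(0) ≤ δ and Y(0) = 0. Then there is an absolute constant C > 0 (independent of α, β, X, Y) such that for all t ≥ 0: X(0) ≤ X(t) ≤ C δ √(1 + log(δ/X(0))) and |Y(t)| ≤ C √(α (1 + log(δ/X(0)))). -/
set_option maxHeartbeats 2000000 in
lemma ode_trajectory_bounds_aux :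
      ∀ α β : ℝ, 0 < α → 0 < β →
        ∀ X Y : ℝ → ℝ,
          (∀ t : ℝ, 0 ≤ t → 0 < X t) →
          (∀ t : ℝ, 0 ≤ t → HasDerivAt X (X t * Y t) t) →
          (∀ t : ℝ, 0 ≤ t → HasDerivAt Y (α - β * X t ^ 2 / 2) t) →
          0 < X 0 → X 0 ≤ Real.sqrt (2 * α / β) → Y 0 = 0 →
          ∀ t : ℝ, 0 ≤ t →
            X 0 ≤ X t ∧
            X t ≤ 2 * Real.sqrt (2 * α / β) *
              Real.sqrt (1 + Real.log (Real.sqrt (2 * α / β) / X 0)) ∧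
            |Y t| ≤ 2 * Real.sqrt (α * (1 + Real.log (Real.sqrt (2 * α / β) / X 0))) := by
  intro α β hα hβ X Y hXpos hX' hY' hX0 hX0le hY0 t ht
  have hαβ : (0:ℝ) < 2 * α / β := by positivity
  set δ : ℝ := Real.sqrt (2 * α / β) with hδ
  have hδpos : 0 < δ := Real.sqrt_pos.mpr hαβ
  have hδsq : δ ^ 2 = 2 * α / β := Real.sq_sqrt hαβ.le
  -- conserved quantity
  set G : ℝ → ℝ := fun s => β * (X s) ^ 2 / (2 * α) - 2 * Real.log (X s) + (Y s) ^ 2 / α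
    with hGdef
  have hGd : ∀ s : ℝ, 0 ≤ s → HasDerivAt G 0 s := by
    intro s hs
    have hx := hX' s hs
    have hy := hY' s hs
    have hxpos := hXpos s hs
    have h1 : HasDerivAt (fun u => β * (X u) ^ 2 / (2 * α))
        (β * (2 * X s ^ 1 * (X s * Y s)) / (2 * α)) s := ((hx.pow 2).const_mul β).div_const _
    have h2 : HasDerivAt (fun u => 2 * Real.log (X u)) (2 * ((X s * Y s) / X s)) s :=
      (hx.log hxpos.ne').const_mul 2
    have h3 : HasDerivAt (fun u => (Y u) ^ 2 / α)
        ((2 * Y s ^ 1 * (α - β * X s ^ 2 / 2)) / α) s := (hy.pow 2).div_const _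
    have := (h1.sub h2).add h3
    convert this using 1
    · rfl
    · rfl
    · rfl
    field_simp
    ring
  have hGconst : G t = G 0 := by
    have hcont : ContinuousOn G (Set.Icc 0 t) := fun s hs =>
      ((hGd s hs.1).continuousAt).continuousWithinAt
    have hder : ∀ s ∈ Set.Ico 0 t, HasDerivWithinAt G 0 (Set.Ici s) s := fun s hs =>
      (hGd s hs.1).hasDerivWithinAt
    exact constant_of_has_deriv_right_zero hcont hder t (Set.right_mem_Icc.mpr ht)
  -- rewrite via z
  set zt : ℝ := β * (X t) ^ 2 / (2 * α) with hzt
  set z0 : ℝ := β * (X 0) ^ 2 / (2 * α) with hz0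
  have hXt := hXpos t ht
  have hztpos : 0 < zt := by positivity
  have hz0pos : 0 < z0 := by positivity
  have hlogt : 2 * Real.log (X t) = Real.log zt + Real.log (2 * α / β) := by
    have h1 : zt * (2 * α / β) = X t ^ 2 := by rw [hzt]; field_simp
    have h2 : Real.log (X t ^ 2) = 2 * Real.log (X t) := by
      rw [Real.log_pow]; push_cast; ring
    rw [← h2, ← h1, Real.log_mul hztpos.ne' hαβ.ne']
  have hlog0 : 2 * Real.log (X 0) = Real.log z0 + Real.log (2 * α / β) := by
    have h1 : z0 * (2 * α / β) = X 0 ^ 2 := by rw [hz0]; field_simp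
    have h2 : Real.log (X 0 ^ 2) = 2 * Real.log (X 0) := by
      rw [Real.log_pow]; push_cast; ring
    rw [← h2, ← h1, Real.log_mul hz0pos.ne' hαβ.ne']
  have key : zt - Real.log zt + (Y t) ^ 2 / α = z0 - Real.log z0 := by
    have h := hGconst
    simp only [hGdef, hY0] at h
    have h' : β * X t ^ 2 / (2 * α) - 2 * Real.log (X t) + Y t ^ 2 / α
        = β * X 0 ^ 2 / (2 * α) - 2 * Real.log (X 0) + 0 ^ 2 / α := h
    rw [hlogt, hlog0] at h'
    have : (0:ℝ) ^ 2 / α = 0 := by simp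
    rw [this] at h'
    linarith [h']
  -- basic facts
  have hz0le : z0 ≤ 1 := by
    have hx2 : X 0 ^ 2 ≤ 2 * α / β := by
      calc X 0 ^ 2 ≤ δ ^ 2 := by
            apply pow_le_pow_left₀ hX0.le hX0le
          _ = 2 * α / β := hδsq
    rw [hz0, div_le_one (by positivity)]
    nlinarith [(le_div_iff₀ hβ).mp hx2]
  set ℓ : ℝ := Real.log (δ / X 0) with hℓdef
  have hℓ : Real.log z0 = -2 * ℓ := by
    have hlogδ : Real.log δ = Real.log (2 * α / β) / 2 := Real.log_sqrt hαβ.le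
    have : ℓ = Real.log δ - Real.log (X 0) := Real.log_div hδpos.ne' hX0.ne'
    rw [this, hlogδ]
    linarith [hlog0]
  have hℓ0 : 0 ≤ ℓ := Real.log_nonneg ((one_le_div hX0).mpr hX0le)
  set L : ℝ := 1 + ℓ with hLdef
  have hL1 : 1 ≤ L := by simp [hLdef]; linarith
  have hLpos : 0 < L := by linarith
  have hy2 : 0 ≤ (Y t) ^ 2 / α := by positivity
  have hlogz0 : Real.log z0 ≤ z0 - 1 := Real.log_le_sub_one_of_pos hz0pos
  have hlogzt : Real.log zt ≤ zt - 1 := Real.log_le_sub_one_of_pos hztpos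
  -- (1) lower bound: zt ≥ z0
  have hztge : z0 ≤ zt := by
    by_contra h
    push_neg at h
    have hne : zt / z0 ≠ 1 := by
      intro he
      have : zt = z0 := by
        field_simp at he; linarith
      linarith
    have hlt : Real.log (zt / z0) < zt / z0 - 1 :=
      Real.log_lt_sub_one_of_pos (by positivity) hne
    rw [Real.log_div hztpos.ne' hz0pos.ne'] at hlt
    -- zt - z0 + y²/α = log zt - log z0 < zt/z0 - 1
    have h1 : zt - z0 + (Y t) ^ 2 / α < zt / z0 - 1 := by linarith [key]
    have h2 : z0 * (zt - z0 + (Y t) ^ 2 / α) < z0 * (zt / z0 - 1) := by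
      exact (mul_lt_mul_iff_right₀ hz0pos).mpr h1
    have h3 : z0 * (zt / z0 - 1) = zt - z0 := by field_simp
    nlinarith [mul_nonneg hz0pos.le hy2]
  have hXlow : X 0 ≤ X t := by
    have hx2 : X 0 ^ 2 ≤ X t ^ 2 := by
      have h := mul_le_mul_of_nonneg_right hztge hαβ.le
      calc X 0 ^ 2 = z0 * (2 * α / β) := by rw [hz0]; field_simp
        _ ≤ zt * (2 * α / β) := h
        _ = X t ^ 2 := by rw [hzt]; field_simp
    calc X 0 = Real.sqrt (X 0 ^ 2) := (Real.sqrt_sq hX0.le).symm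
      _ ≤ Real.sqrt (X t ^ 2) := Real.sqrt_le_sqrt hx2
      _ = X t := Real.sqrt_sq hXt.le
  -- (2) upper bound on zt
  have hlog2 : Real.log zt - Real.log 2 ≤ zt / 2 - 1 := by
    have := Real.log_le_sub_one_of_pos (show (0:ℝ) < zt / 2 by positivity)
    rwa [Real.log_div hztpos.ne' two_ne_zero] at this
  have hlog2lt : Real.log 2 ≤ 1 := by
    have := Real.log_le_sub_one_of_pos (show (0:ℝ) < 2 by norm_num)
    linarith
  have hztle : zt ≤ 4 * L := by
    have h1 : zt - Real.log zt ≤ z0 - Real.log z0 := by linarith [key]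
    have h2 : z0 - Real.log z0 ≤ 1 + 2 * ℓ := by rw [hℓ]; linarith
    -- zt - log zt ≥ zt/2 + 1 - log 2
    have h3 : zt / 2 + 1 - Real.log 2 ≤ zt - Real.log zt := by linarith
    simp only [hLdef]
    linarith
  have hXup : X t ≤ 2 * δ * Real.sqrt L := by
    have hx2 : X t ^ 2 ≤ (2 * δ * Real.sqrt L) ^ 2 := by
      have hsqL : Real.sqrt L ^ 2 = L := Real.sq_sqrt hLpos.le
      have hXt2 : X t ^ 2 = zt * (2 * α / β) := by rw [hzt]; field_simp
      have : (2 * δ * Real.sqrt L) ^ 2 = 4 * (2 * α / β) * L := by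
        rw [mul_pow, mul_pow, hsqL, hδsq]; ring
      rw [hXt2, this]
      calc zt * (2 * α / β) ≤ (4 * L) * (2 * α / β) :=
            mul_le_mul_of_nonneg_right hztle hαβ.le
        _ = 4 * (2 * α / β) * L := by ring
    calc X t = Real.sqrt (X t ^ 2) := (Real.sqrt_sq hXt.le).symm
      _ ≤ Real.sqrt ((2 * δ * Real.sqrt L) ^ 2) := Real.sqrt_le_sqrt hx2
      _ = 2 * δ * Real.sqrt L := Real.sqrt_sq (by positivity)
  -- (3) Y bound
  have hYbound : |Y t| ≤ 2 * Real.sqrt (α * L) := by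
    have hy2le : (Y t) ^ 2 ≤ 4 * (α * L) := by
      have h1 : (Y t) ^ 2 / α ≤ z0 - Real.log z0 - 1 := by linarith [key, hlogzt]
      have h2 : (Y t) ^ 2 / α ≤ 2 * ℓ := by rw [hℓ] at h1; linarith
      have h3 : (Y t) ^ 2 ≤ α * (2 * ℓ) := by
        have := (div_le_iff₀ hα).mp h2
        linarith [this]
      simp only [hLdef]
      nlinarith [mul_nonneg hα.le hℓ0, hα.le]
    have : (2 * Real.sqrt (α * L)) ^ 2 = 4 * (α * L) := by
      rw [mul_pow, Real.sq_sqrt (by positivity)]; ring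
    calc |Y t| = Real.sqrt ((Y t) ^ 2) := (Real.sqrt_sq_eq_abs _).symm
      _ ≤ Real.sqrt ((2 * Real.sqrt (α * L)) ^ 2) := Real.sqrt_le_sqrt (by rw [this]; exact hy2le)
      _ = 2 * Real.sqrt (α * L) := Real.sqrt_sq (by positivity)
  exact ⟨hXlow, hXup, hYbound⟩


/-- bounds on the trajectory of the ODE `X' = XY`, `Y' = α − βX²/2`
started at `0 < X(0) ≤ δ := √(2α/β)`, `Y(0) = 0`: there is an absolute constant `C > 0`
such that for all `t ≥ 0`, `X(0) ≤ X(t) ≤ C δ √(1 + log(δ/X(0)))` and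
`|Y(t)| ≤ C √(α(1 + log(δ/X(0))))`. -/
theorem ode_trajectory_bounds :
    ∃ C : ℝ, 0 < C ∧
      ∀ α β : ℝ, 0 < α → 0 < β →
        ∀ X Y : ℝ → ℝ,
          (∀ t : ℝ, 0 ≤ t → 0 < X t) →
          (∀ t : ℝ, 0 ≤ t → HasDerivAt X (X t * Y t) t) →
          (∀ t : ℝ, 0 ≤ t → HasDerivAt Y (α - β * X t ^ 2 / 2) t) →
          0 < X 0 → X 0 ≤ Real.sqrt (2 * α / β) → Y 0 = 0 →
          ∀ t : ℝ, 0 ≤ t →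
            X 0 ≤ X t ∧
            X t ≤ C * Real.sqrt (2 * α / β) *
              Real.sqrt (1 + Real.log (Real.sqrt (2 * α / β) / X 0)) ∧
            |Y t| ≤ C * Real.sqrt (α * (1 + Real.log (Real.sqrt (2 * α / β) / X 0))) :=
  ⟨2, by norm_num, ode_trajectory_bounds_aux⟩
end

section
/- Let η, α, β > 0 and set δ := √(2α/β). Consider the map T(x, y) = (−(1 + ηy)x, y + η(α − β x²/2)) on ℝ². Then the points (x₀, y₀) with x₀ ≠ 0 and 1 + ηy₀ > 0 and 1 + ηy₁ > 0 (where (x₁,y₁) = T(x₀,y₀)) that satisfy T(T(x₀, y₀)) = (x₀, y₀) are exactly (x₀, y₀) = (δ, 0) and (x₀, y₀) = (−δ, 0). -/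
/-- the period-2 points of the simplified edge-of-stability map
`T(x,y) = (−(1+ηy)x, y + η(α − βx²/2))` with `x₀ ≠ 0`, `1 + ηy₀ > 0` and `1 + ηy₁ > 0`
are exactly `(δ, 0)` and `(−δ, 0)`, where `δ := √(2α/β)`. -/
theorem period_two_orbits (η α β : ℝ) (hη : 0 < η) (hα : 0 < α) (hβ : 0 < β)
    (T : ℝ × ℝ → ℝ × ℝ)
    (hT : ∀ x y : ℝ, T (x, y) = (-(1 + η * y) * x, y + η * (α - β * x ^ 2 / 2))) :
    ∀ x₀ y₀ : ℝ, x₀ ≠ 0 → 0 < 1 + η * y₀ → 0 < 1 + η * (T (x₀, y₀)).2 →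
      (T (T (x₀, y₀)) = (x₀, y₀) ↔
        (x₀ = Real.sqrt (2 * α / β) ∧ y₀ = 0) ∨
        (x₀ = -Real.sqrt (2 * α / β) ∧ y₀ = 0)) := by
  intro x₀ y₀ hx h1 h2
  rw [hT x₀ y₀] at h2 ⊢
  simp only at h2
  rw [hT, Prod.mk.injEq]
  have hs : Real.sqrt (2 * α / β) ^ 2 = 2 * α / β := by
    rw [Real.sq_sqrt]; positivity
  have hsp : 0 < Real.sqrt (2 * α / β) := by
    apply Real.sqrt_pos.2; positivity
  have hk : α - β * Real.sqrt (2 * α / β) ^ 2 / 2 = 0 := by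
    rw [hs]; field_simp; ring
  constructor
  · rintro ⟨e1, e2⟩
    -- product of multipliers is 1
    have hc : (1 + η * y₀) * (1 + η * (y₀ + η * (α - β * x₀ ^ 2 / 2))) = 1 := by
      have h' : ((1 + η * y₀) * (1 + η * (y₀ + η * (α - β * x₀ ^ 2 / 2))) - 1) * x₀ = 0 := by
        linear_combination e1
      rcases mul_eq_zero.1 h' with h | h
      · linarith
      · exact absurd h hx
    have ha2 : ((1 + η * y₀) ^ 2 - 1) * ((1 + η * y₀) * η ^ 2 * β * x₀ ^ 2 / 2 + 2) = 0 := by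
      linear_combination 2 * hc - (1 + η * y₀) * η * e2
    have hpos : 0 < (1 + η * y₀) * η ^ 2 * β * x₀ ^ 2 / 2 + 2 := by positivity
    have ha : (1 + η * y₀) ^ 2 = 1 := by
      have := (mul_eq_zero.1 ha2).resolve_right hpos.ne'
      linarith
    have hy0 : y₀ = 0 := by
      have h1' : 1 + η * y₀ = 1 := by nlinarith
      have := hη.ne'
      field_simp at h1'
      exact (mul_eq_zero.1 (by linarith : η * y₀ = 0)).resolve_left this
    subst hy0
    have hy1 : α - β * x₀ ^ 2 / 2 = 0 := by
      have := mul_pos hη hη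
      nlinarith [hc]
    have hx2 : x₀ ^ 2 = Real.sqrt (2 * α / β) ^ 2 := by
      rw [hs]; field_simp at hy1 ⊢; linarith
    rcases sq_eq_sq_iff_eq_or_eq_neg.1 hx2 with h | h
    · exact Or.inl ⟨h, rfl⟩
    · exact Or.inr ⟨h, rfl⟩
  · rintro (⟨rfl, rfl⟩ | ⟨rfl, rfl⟩)
    · exact ⟨by linear_combination η ^ 2 * Real.sqrt (2 * α / β) * hk, by linear_combination 2 * η * hk⟩
    · exact ⟨by linear_combination -(η ^ 2 * Real.sqrt (2 * α / β)) * hk, by linear_combination 2 * η * hk⟩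
end

section
/- Let η, α, β > 0 and define L : ℝ³ → ℝ by L(x, y, z) = (2/η + √β · y) x²/2 − (α/√β) y − z. Let p = (0, y₀, z₀) be any point with first coordinate 0 such that 2/η + √β y₀ > 0. Then: (i) ∇L(p) = (0, −α/√β, −1); (ii) the Hessian ∇²L(p) equals (2/η + √β y₀) e₁ e₁ᵀ, so its largest eigenvalue is S(p) = 2/η + √β y₀, it is simple, and e₁ = (1,0,0) is the unit top eigenvector; (iii) the gradient of the sharpness is ∇S(p) = (0, √β, 0); (iv) the progressive sharpening coefficient satisfies −∇L(p) · ∇S(p) = α; and (v) ‖∇S(p)‖² = β and ∇S(p) ⊥ e₁. -/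
open scoped RealInnerProductSpace

/-- The sharpness `S(θ)`: the largest eigenvalue of the Hessian `∇²L(θ)`, expressed as the
supremum of the Rayleigh quotient of the second derivative over unit vectors. -/
noncomputable def sharpness {d : ℕ} (L : EuclideanSpace ℝ (Fin d) → ℝ)
    (θ : EuclideanSpace ℝ (Fin d)) : ℝ :=
  sSup {r : ℝ | ∃ v : EuclideanSpace ℝ (Fin d), ‖v‖ = 1 ∧ iteratedFDeriv ℝ 2 L θ ![v, v] = r}

noncomputable abbrev E3 := EuclideanSpace ℝ (Fin 3)

noncomputable def Dmap (η α β : ℝ) (x : E3) : E3 →L[ℝ] ℝ :=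
  ((2 / η + Real.sqrt β * x 1) * x 0) • EuclideanSpace.proj 0
  + ((1 / 2 * Real.sqrt β) * (x 0 * x 0) - α / Real.sqrt β) • EuclideanSpace.proj 1
  - EuclideanSpace.proj 2

lemma L_hasFDeriv (η α β : ℝ) (L : E3 → ℝ)
    (hLdef : ∀ θ : E3,
      L θ = (2 / η + Real.sqrt β * θ 1) * (θ 0) ^ 2 / 2 - α / Real.sqrt β * θ 1 - θ 2)
    (x : E3) : HasFDerivAt L (Dmap η α β x) x := by
  have h0 : HasFDerivAt (fun y : E3 => y 0) (EuclideanSpace.proj (0:Fin 3) : E3 →L[ℝ] ℝ) x := by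
    exact (EuclideanSpace.proj (0:Fin 3) : E3 →L[ℝ] ℝ).hasFDerivAt (x := x)
  have h1 : HasFDerivAt (fun y : E3 => y 1) (EuclideanSpace.proj (1:Fin 3) : E3 →L[ℝ] ℝ) x := by
    exact (EuclideanSpace.proj (1:Fin 3) : E3 →L[ℝ] ℝ).hasFDerivAt (x := x)
  have h2 : HasFDerivAt (fun y : E3 => y 2) (EuclideanSpace.proj (2:Fin 3) : E3 →L[ℝ] ℝ) x := by
    exact (EuclideanSpace.proj (2:Fin 3) : E3 →L[ℝ] ℝ).hasFDerivAt (x := x)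
  have hA : HasFDerivAt (fun y : E3 => 2 / η + Real.sqrt β * y 1)
      (Real.sqrt β • EuclideanSpace.proj (1:Fin 3)) x := (h1.const_mul (Real.sqrt β)).const_add _
  have hF := ((((hA.mul (h0.mul h0)).const_mul (1/2))).sub (h1.const_mul (α / Real.sqrt β))).sub h2
  have hLF : L = fun y : E3 => (1/2) * ((2 / η + Real.sqrt β * y 1) * (y 0 * y 0))
      - α / Real.sqrt β * y 1 - y 2 := by
    funext θ; rw [hLdef θ]; ring
  rw [hLF]
  refine hF.congr_fderiv ?_
  ext v
  simp [Dmap]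
  ring

lemma hess (η α β : ℝ) (L : E3 → ℝ)
    (hLdef : ∀ θ : E3,
      L θ = (2 / η + Real.sqrt β * θ 1) * (θ 0) ^ 2 / 2 - α / Real.sqrt β * θ 1 - θ 2)
    (z u v : E3) : iteratedFDeriv ℝ 2 L z ![u, v] =
      (2 / η + Real.sqrt β * z 1) * (u 0 * v 0)
        + Real.sqrt β * z 0 * (u 1 * v 0 + u 0 * v 1) := by
  rw [iteratedFDeriv_two_apply]
  have hfd : fderiv ℝ L = fun x => Dmap η α β x :=
    funext fun x => (L_hasFDeriv η α β L hLdef x).fderiv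
  rw [hfd]
  have h0 : HasFDerivAt (fun y : E3 => y 0) (EuclideanSpace.proj (0:Fin 3) : E3 →L[ℝ] ℝ) z := by
    exact (EuclideanSpace.proj (0:Fin 3) : E3 →L[ℝ] ℝ).hasFDerivAt (x := z)
  have h1 : HasFDerivAt (fun y : E3 => y 1) (EuclideanSpace.proj (1:Fin 3) : E3 →L[ℝ] ℝ) z := by
    exact (EuclideanSpace.proj (1:Fin 3) : E3 →L[ℝ] ℝ).hasFDerivAt (x := z)
  have hA : HasFDerivAt (fun y : E3 => 2 / η + Real.sqrt β * y 1)
      (Real.sqrt β • (EuclideanSpace.proj (1:Fin 3) : E3 →L[ℝ] ℝ)) z :=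
    (h1.const_mul (Real.sqrt β)).const_add _
  have hc1 := hA.mul h0
  have hc2 := ((h0.mul h0).const_mul (1 / 2 * Real.sqrt β)).sub_const (α / Real.sqrt β)
  have hD := ((hc1.smul (hasFDerivAt_const (EuclideanSpace.proj (0:Fin 3) : E3 →L[ℝ] ℝ) z)).add
    (hc2.smul (hasFDerivAt_const (EuclideanSpace.proj (1:Fin 3) : E3 →L[ℝ] ℝ) z))).sub
    (hasFDerivAt_const (EuclideanSpace.proj (2:Fin 3) : E3 →L[ℝ] ℝ) z)
  have hDe : (fun x => Dmap η α β x) = (fun x : E3 =>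
      ((2 / η + Real.sqrt β * x 1) * x 0) • (EuclideanSpace.proj (0:Fin 3) : E3 →L[ℝ] ℝ)
      + ((1 / 2 * Real.sqrt β) * (x 0 * x 0) - α / Real.sqrt β) •
          (EuclideanSpace.proj (1:Fin 3) : E3 →L[ℝ] ℝ)
      - (EuclideanSpace.proj (2:Fin 3) : E3 →L[ℝ] ℝ)) := rfl
  rw [hDe]
  erw [hD.fderiv]
  simp
  ring


lemma sharpness_eq (η α β : ℝ) (hβ : 0 < β) (L : E3 → ℝ)
    (hLdef : ∀ θ : E3,
      L θ = (2 / η + Real.sqrt β * θ 1) * (θ 0) ^ 2 / 2 - α / Real.sqrt β * θ 1 - θ 2)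
    (z : E3) (hz : 0 < 2 / η + Real.sqrt β * z 1) :
    sharpness L z = ((2 / η + Real.sqrt β * z 1)
      + Real.sqrt ((2 / η + Real.sqrt β * z 1) ^ 2 + 4 * β * (z 0) ^ 2)) / 2 := by
  obtain ⟨a, ha⟩ : ∃ x : ℝ, x = 2 / η + Real.sqrt β * z 1 := ⟨_, rfl⟩
  obtain ⟨b, hb⟩ : ∃ x : ℝ, x = Real.sqrt β * z 0 := ⟨_, rfl⟩
  rw [← ha] at hz ⊢
  have hb2 : b ^ 2 = β * (z 0) ^ 2 := by rw [hb, mul_pow, Real.sq_sqrt hβ.le]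
  have hab : a ^ 2 + 4 * β * (z 0) ^ 2 = a ^ 2 + 4 * b ^ 2 := by rw [hb2]; ring
  rw [hab]
  obtain ⟨s, hsdef⟩ : ∃ x : ℝ, x = Real.sqrt (a ^ 2 + 4 * b ^ 2) := ⟨_, rfl⟩
  rw [← hsdef]
  have hs2 : s ^ 2 = a ^ 2 + 4 * b ^ 2 := by rw [hsdef]; exact Real.sq_sqrt (by positivity)
  have hsa : a ≤ s := by
    rw [hsdef]
    calc a = Real.sqrt (a ^ 2) := (Real.sqrt_sq hz.le).symm
    _ ≤ _ := Real.sqrt_le_sqrt (by nlinarith)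
  obtain ⟨lam, hlamdef⟩ : ∃ x : ℝ, x = (a + s) / 2 := ⟨_, rfl⟩
  rw [← hlamdef]
  have hlam : 0 < lam := by rw [hlamdef]; linarith
  have hquad : lam ^ 2 = a * lam + b ^ 2 := by rw [hlamdef]; nlinarith [hs2]
  have hn2pos : 0 < lam ^ 2 + b ^ 2 := by positivity
  obtain ⟨n, hndef⟩ : ∃ x : ℝ, x = Real.sqrt (lam ^ 2 + b ^ 2) := ⟨_, rfl⟩
  have hn2 : n ^ 2 = lam ^ 2 + b ^ 2 := by rw [hndef]; exact Real.sq_sqrt hn2pos.le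
  have hn : 0 < n := by rw [hndef]; exact Real.sqrt_pos.2 hn2pos
  have hgr : IsGreatest
      {r : ℝ | ∃ v : E3, ‖v‖ = 1 ∧ iteratedFDeriv ℝ 2 L z ![v, v] = r} lam := by
    constructor
    · refine ⟨(WithLp.equiv 2 (Fin 3 → ℝ)).symm ![lam / n, b / n, 0], ?_, ?_⟩
      · rw [EuclideanSpace.norm_eq, Fin.sum_univ_three]
        simp only [WithLp.equiv_symm_apply, PiLp.toLp_apply, Matrix.cons_val_zero, Matrix.cons_val_one,
          Matrix.head_cons, Matrix.cons_val_two, Matrix.tail_cons, Real.norm_eq_abs, sq_abs]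
        rw [show (lam / n) ^ 2 + (b / n) ^ 2 + (0:ℝ) ^ 2 = 1 by
          field_simp; linarith [hn2]]
        exact Real.sqrt_one
      · rw [hess η α β L hLdef]
        simp only [WithLp.equiv_symm_apply, PiLp.toLp_apply, Matrix.cons_val_zero, Matrix.cons_val_one,
          Matrix.head_cons, Matrix.cons_val_two, Matrix.tail_cons]
        rw [← ha, ← hb]
        rw [show a * (lam / n * (lam / n)) + b * (b / n * (lam / n) + lam / n * (b / n))
            = (a * lam ^ 2 + 2 * b ^ 2 * lam) / n ^ 2 by ring]
        rw [show a * lam ^ 2 + 2 * b ^ 2 * lam = lam * n ^ 2 by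
          linear_combination (-lam) * hn2 + (-lam) * hquad]
        rw [mul_div_assoc, div_self (by positivity), mul_one]
    · rintro r ⟨u, hu, hr⟩
      rw [hess η α β L hLdef, ← ha, ← hb] at hr
      have hu2 : (u 0) ^ 2 + (u 1) ^ 2 + (u 2) ^ 2 = 1 := by
        have h1 : ‖u‖ ^ 2 = 1 := by rw [hu]; norm_num
        rw [EuclideanSpace.norm_eq, Fin.sum_univ_three,
          Real.sq_sqrt (by positivity)] at h1
        simpa [Real.norm_eq_abs, sq_abs] using h1
      nlinarith [sq_nonneg (b * u 0 - lam * u 1), sq_nonneg (lam * u 2), hquad, hu2, hlam,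
        mul_pos hlam hlam]
  rw [sharpness, hgr.csSup_eq, hlamdef]

lemma grad_sharp (η α β : ℝ) (hβ : 0 < β) (L : E3 → ℝ)
    (hLdef : ∀ θ : E3,
      L θ = (2 / η + Real.sqrt β * θ 1) * (θ 0) ^ 2 / 2 - α / Real.sqrt β * θ 1 - θ 2)
    (y₀ z₀ : ℝ) (p : E3)
    (hp : p = (WithLp.equiv 2 (Fin 3 → ℝ)).symm ![0, y₀, z₀])
    (hpos : 0 < 2 / η + Real.sqrt β * y₀) :
    HasGradientAt (sharpness L)
      ((WithLp.equiv 2 (Fin 3 → ℝ)).symm ![0, Real.sqrt β, 0]) p := by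
  have hp0 : p 0 = 0 := by rw [hp]; rfl
  have hp1 : p 1 = y₀ := by rw [hp]; rfl
  have h0 : HasFDerivAt (fun y : E3 => y 0) (EuclideanSpace.proj (0:Fin 3) : E3 →L[ℝ] ℝ) p := by
    exact (EuclideanSpace.proj (0:Fin 3) : E3 →L[ℝ] ℝ).hasFDerivAt (x := p)
  have h1 : HasFDerivAt (fun y : E3 => y 1) (EuclideanSpace.proj (1:Fin 3) : E3 →L[ℝ] ℝ) p := by
    exact (EuclideanSpace.proj (1:Fin 3) : E3 →L[ℝ] ℝ).hasFDerivAt (x := p)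
  have hA : HasFDerivAt (fun y : E3 => 2 / η + Real.sqrt β * y 1)
      (Real.sqrt β • (EuclideanSpace.proj (1:Fin 3) : E3 →L[ℝ] ℝ)) p :=
    (h1.const_mul (Real.sqrt β)).const_add _
  have hU := (hA.mul hA).add ((h0.mul h0).const_mul (4 * β))
  have hUne : ((fun y : E3 => (2 / η + Real.sqrt β * y 1) * (2 / η + Real.sqrt β * y 1)
      + 4 * β * (y 0 * y 0)) p) ≠ 0 := by
    simp only [hp0, hp1]
    have := mul_pos hpos hpos
    nlinarith
  have hsqrt := hU.sqrt hUne
  have hf := (hA.add hsqrt).const_mul (1/2)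
  have hfe : (fun y : E3 => (1:ℝ)/2 * ((2 / η + Real.sqrt β * y 1)
      + Real.sqrt ((2 / η + Real.sqrt β * y 1) * (2 / η + Real.sqrt β * y 1)
        + 4 * β * (y 0 * y 0))))
      = fun θ : E3 => ((2 / η + Real.sqrt β * θ 1)
      + Real.sqrt ((2 / η + Real.sqrt β * θ 1) ^ 2 + 4 * β * (θ 0) ^ 2)) / 2 := by
    funext θ
    rw [show (2 / η + Real.sqrt β * θ 1) * (2 / η + Real.sqrt β * θ 1)
        + 4 * β * (θ 0 * θ 0) = (2 / η + Real.sqrt β * θ 1) ^ 2 + 4 * β * (θ 0) ^ 2 by ring]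
    ring
  erw [hfe] at hf
  have hsq : Real.sqrt ((2 / η + Real.sqrt β * y₀) * (2 / η + Real.sqrt β * y₀))
      = 2 / η + Real.sqrt β * y₀ := Real.sqrt_mul_self hpos.le
  have hfd : HasFDerivAt
      (fun θ : E3 => ((2 / η + Real.sqrt β * θ 1)
        + Real.sqrt ((2 / η + Real.sqrt β * θ 1) ^ 2 + 4 * β * (θ 0) ^ 2)) / 2)
      ((InnerProductSpace.toDual ℝ E3) ((WithLp.equiv 2 (Fin 3 → ℝ)).symm ![0, Real.sqrt β, 0]))
      p := by
    refine hf.congr_fderiv ?_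
    ext v
    simp [InnerProductSpace.toDual_apply_apply, PiLp.inner_apply, Fin.sum_univ_three,
      hp0, hp1, hsq, RCLike.inner_apply]
    field_simp
    ring
  -- the open set where the formula holds
  have hc : Continuous fun θ : E3 => 2 / η + Real.sqrt β * θ 1 :=
    continuous_const.add (continuous_const.mul (EuclideanSpace.proj (1:Fin 3) :
      E3 →L[ℝ] ℝ).continuous)
  have hopen : IsOpen {θ : E3 | 0 < 2 / η + Real.sqrt β * θ 1} :=
    isOpen_lt continuous_const hc
  have hpmem : p ∈ {θ : E3 | 0 < 2 / η + Real.sqrt β * θ 1} := by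
    simp only [Set.mem_setOf_eq, hp1]; exact hpos
  have heq : sharpness L =ᶠ[nhds p]
      fun θ : E3 => ((2 / η + Real.sqrt β * θ 1)
        + Real.sqrt ((2 / η + Real.sqrt β * θ 1) ^ 2 + 4 * β * (θ 0) ^ 2)) / 2 :=
    Filter.eventuallyEq_of_mem (hopen.mem_nhds hpmem)
      (fun θ hθ => sharpness_eq η α β hβ L hLdef θ hθ)
  exact hasGradientAt_iff_hasFDerivAt.2 (hfd.congr_of_eventuallyEq heq)

/-- Toy model for self-stabilization: for
`L(x,y,z) = (2/η + √β·y)x²/2 − (α/√β)y − z` on `ℝ³` and any point `p = (0, y₀, z₀)` with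
`2/η + √β y₀ > 0`:
(i) `∇L(p) = (0, −α/√β, −1)`;
(ii) `∇²L(p) = (2/η + √β y₀) e₁e₁ᵀ`, its largest eigenvalue is `S(p) = 2/η + √β y₀`,
it is simple, and `e₁` is the unit top eigenvector;
(iii) `∇S(p) = (0, √β, 0)`;
(iv) `−∇L(p)·∇S(p) = α`;
(v) `‖∇S(p)‖² = β` and `∇S(p) ⊥ e₁`. -/
theorem toy_model_self_stabilization (η α β : ℝ) (hη : 0 < η) (hα : 0 < α) (hβ : 0 < β)
    (L : EuclideanSpace ℝ (Fin 3) → ℝ)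
    (hLdef : ∀ θ : EuclideanSpace ℝ (Fin 3),
      L θ = (2 / η + Real.sqrt β * θ 1) * (θ 0) ^ 2 / 2 - α / Real.sqrt β * θ 1 - θ 2)
    (y₀ z₀ : ℝ) (p : EuclideanSpace ℝ (Fin 3))
    (hp : p = (WithLp.equiv 2 (Fin 3 → ℝ)).symm ![0, y₀, z₀])
    (hpos : 0 < 2 / η + Real.sqrt β * y₀) :
    -- (i) the gradient of `L` at `p`
    gradient L p = (WithLp.equiv 2 (Fin 3 → ℝ)).symm ![0, -α / Real.sqrt β, -1] ∧
    -- (ii) the Hessian at `p` is `(2/η + √β y₀) e₁e₁ᵀ` ...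
    (∀ v w : EuclideanSpace ℝ (Fin 3),
      iteratedFDeriv ℝ 2 L p ![v, w] = (2 / η + Real.sqrt β * y₀) * (v 0 * w 0)) ∧
    -- ... with largest eigenvalue `S(p) = 2/η + √β y₀` ...
    sharpness L p = 2 / η + Real.sqrt β * y₀ ∧
    -- ... `e₁` a unit top eigenvector ...
    ‖(EuclideanSpace.single (0 : Fin 3) (1 : ℝ))‖ = 1 ∧
    (∀ w : EuclideanSpace ℝ (Fin 3),
      iteratedFDeriv ℝ 2 L p ![EuclideanSpace.single (0 : Fin 3) (1 : ℝ), w] =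
        (2 / η + Real.sqrt β * y₀) * ⟪EuclideanSpace.single (0 : Fin 3) (1 : ℝ), w⟫) ∧
    -- ... and the top eigenvalue simple (every eigenvector is a multiple of `e₁`)
    (∀ v : EuclideanSpace ℝ (Fin 3),
      (∀ w, iteratedFDeriv ℝ 2 L p ![v, w] = (2 / η + Real.sqrt β * y₀) * ⟪v, w⟫) →
        ∃ c : ℝ, v = c • EuclideanSpace.single (0 : Fin 3) (1 : ℝ)) ∧
    -- (iii) the sharpness is differentiable at `p` with gradient `∇S(p) = (0, √β, 0)`
    HasGradientAt (sharpness L)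
      ((WithLp.equiv 2 (Fin 3 → ℝ)).symm ![0, Real.sqrt β, 0]) p ∧
    -- (iv) the progressive sharpening coefficient is `α`
    -⟪(WithLp.equiv 2 (Fin 3 → ℝ)).symm ![0, -α / Real.sqrt β, -1],
        (WithLp.equiv 2 (Fin 3 → ℝ)).symm ![0, Real.sqrt β, 0]⟫ = α ∧
    -- (v) `‖∇S(p)‖² = β` and `∇S(p) ⊥ e₁`
    ‖(WithLp.equiv 2 (Fin 3 → ℝ)).symm ![0, Real.sqrt β, 0]‖ ^ 2 = β ∧
    ⟪(WithLp.equiv 2 (Fin 3 → ℝ)).symm ![0, Real.sqrt β, 0],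
        EuclideanSpace.single (0 : Fin 3) (1 : ℝ)⟫ = 0 := by
  have hβs : (0:ℝ) < Real.sqrt β := Real.sqrt_pos.2 hβ
  have hp0 : p 0 = 0 := by rw [hp]; rfl
  have hp1 : p 1 = y₀ := by rw [hp]; rfl
  refine ⟨?_, ?_, ?_, ?_, ?_, ?_, ?_, ?_, ?_, ?_⟩
  · -- (i) gradient
    have hDL := L_hasFDeriv η α β L hLdef p
    have hEq : Dmap η α β p = (InnerProductSpace.toDual ℝ E3)
        ((WithLp.equiv 2 (Fin 3 → ℝ)).symm ![0, -α / Real.sqrt β, -1]) := by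
      ext v
      simp [Dmap, hp0, InnerProductSpace.toDual_apply_apply, PiLp.inner_apply,
        Fin.sum_univ_three, RCLike.inner_apply]
      ring
    have : HasGradientAt L ((WithLp.equiv 2 (Fin 3 → ℝ)).symm ![0, -α / Real.sqrt β, -1]) p :=
      hasGradientAt_iff_hasFDerivAt.2 (hEq ▸ hDL)
    exact this.gradient
  · -- (ii) Hessian
    intro v w
    rw [hess η α β L hLdef, hp0, hp1]
    ring
  · -- sharpness value
    have h1 : 0 < 2 / η + Real.sqrt β * p 1 := by rw [hp1]; exact hpos
    rw [sharpness_eq η α β hβ L hLdef p h1, hp0, hp1]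
    rw [show (2 / η + Real.sqrt β * y₀) ^ 2 + 4 * β * (0:ℝ) ^ 2
        = (2 / η + Real.sqrt β * y₀) ^ 2 by ring, Real.sqrt_sq hpos.le]
    ring
  · -- e₁ unit
    simp
  · -- eigenvector equation
    intro w
    rw [hess η α β L hLdef, hp0, hp1]
    rw [EuclideanSpace.inner_single_left]
    simp
  · -- simplicity
    intro v hv
    have hS : 2 / η + Real.sqrt β * y₀ ≠ 0 := hpos.ne'
    have h1 := hv (EuclideanSpace.single (1 : Fin 3) 1)
    have h2 := hv (EuclideanSpace.single (2 : Fin 3) 1)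
    rw [hess η α β L hLdef, hp0, hp1, EuclideanSpace.inner_single_right] at h1 h2
    simp [EuclideanSpace.single_apply] at h1 h2
    refine ⟨v 0, ?_⟩
    ext i
    fin_cases i <;>
      simp [EuclideanSpace.single_apply, h1.resolve_left hS, h2.resolve_left hS]
  · -- (iii) gradient of sharpness
    exact grad_sharp η α β hβ L hLdef y₀ z₀ p hp hpos
  · -- (iv)
    simp [PiLp.inner_apply, Fin.sum_univ_three, RCLike.inner_apply]
    field_simp
  · -- (v) norm
    have : ‖(WithLp.equiv 2 (Fin 3 → ℝ)).symm ![0, Real.sqrt β, 0]‖ = Real.sqrt β := by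
      rw [EuclideanSpace.norm_eq, Fin.sum_univ_three]
      simp [Real.sqrt_eq_iff_eq_sq, Real.sqrt_nonneg]
    rw [this, Real.sq_sqrt hβ.le]
  · -- (v) orthogonality
    rw [EuclideanSpace.inner_single_right]
    simp
end
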